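/- An integer n > 1 is prime if and only if the sum over i from 0 to ⌊n/2⌋ - 1 of (C(n + i, i + 1) mod n) equals 0. -/

import Mathlib

lemma asc_cast_zmod (p n : ℕ) (hpn : (n : ZMod p) = 0) :
    ∀ k, (((n + 1).ascFactorial k : ℕ) : ZMod p) = (k.factorial : ℕ) := by
  intro k
  induction k with
  | zero => simp
  | succ k ih =>
      rw [Nat.ascFactorial_succ, Nat.factorial_succ]
      push_cast [hpn]
      push_cast at ih
      rw [ih]
      ring

lemma choose_one_mod (p n : ℕ) (hp : p.Prime) (hpn : p ∣ n) :
    ¬ p ∣ (n + (p - 1)).choose (p - 1) := by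
  haveI : Fact p.Prime := ⟨hp⟩
  have h := Nat.ascFactorial_eq_factorial_mul_choose n (p - 1)
  have hc : (((p-1).factorial : ℕ) : ZMod p)
      = ((p-1).factorial : ℕ) * ((n + (p - 1)).choose (p - 1) : ℕ) := by
    conv_lhs => rw [← asc_cast_zmod p n ((ZMod.natCast_eq_zero_iff n p).mpr hpn)]
    exact_mod_cast congrArg (Nat.cast : ℕ → ZMod p) h
  have hfac : (((p-1).factorial : ℕ) : ZMod p) ≠ 0 := by
    rw [ZMod.wilsons_lemma]
    simp
  have h1 : ((n + (p - 1)).choose (p - 1) : ZMod p) = 1 :=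
    (mul_left_cancel₀ hfac (by rw [← hc, mul_one])).symm
  intro hdvd
  rw [(ZMod.natCast_eq_zero_iff _ p).mpr hdvd] at h1
  exact zero_ne_one h1

theorem prime_iff_sum_pascal_binom (n : ℕ) (hn : 1 < n) :
    n.Prime ↔ ∑ i ∈ Finset.range (n / 2), ((n + i).choose (i + 1) % n) = 0 := by
  constructor
  · intro hp
    apply Finset.sum_eq_zero
    intro i hi
    rw [Finset.mem_range] at hi
    have h1 : i + 1 < n := by
      have := Nat.div_lt_self (by omega : 0 < n) (by norm_num : 1 < 2)
      omega
    have hd : n ∣ (n + i).choose (i + 1) :=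
      hp.dvd_choose h1 (by omega) (Nat.le_add_right n i)
    exact Nat.mod_eq_zero_of_dvd hd
  · intro hsum
    by_contra hnp
    set p := n.minFac with hpdef
    have hp : p.Prime := Nat.minFac_prime (by omega)
    have hpn : p ∣ n := Nat.minFac_dvd n
    have hple : p ≤ n / p := Nat.minFac_le_div (by omega) hnp
    have hp2 : 2 ≤ p := hp.two_le
    have hple2 : p ≤ n / 2 := le_trans hple (Nat.div_le_div_left hp2 (by omega))
    have hmem : p - 1 ∈ Finset.range (n / 2) := Finset.mem_range.mpr (by omega)
    have hterm := (Finset.sum_eq_zero_iff.mp hsum) (p - 1) hmem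
    have hsucc : p - 1 + 1 = p := by omega
    rw [hsucc] at hterm
    have hdvd : n ∣ (n + (p - 1)).choose p := Nat.dvd_of_mod_eq_zero hterm
    obtain ⟨c, hc⟩ := hdvd
    have hkey := Nat.choose_succ_right_eq (n + (p - 1)) (p - 1)
    rw [hsucc, hc] at hkey
    have hsub : n + (p - 1) - (p - 1) = n := by omega
    rw [hsub] at hkey
    -- hkey : n * c * p = choose (n + (p-1)) (p-1) * n
    have hq : (n + (p - 1)).choose (p - 1) = c * p := by
      have h2 : n * (c * p) = n * ((n + (p - 1)).choose (p - 1)) := by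
        rw [← mul_assoc, hkey, mul_comm]
      exact (Nat.eq_of_mul_eq_mul_left (by omega) h2).symm
    exact choose_one_mod p n hp hpn ⟨c, by rw [hq, mul_comm]⟩
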